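/- arXiv:2203.16906 — 2 statements merged into one kernel-verified Lean document; each statement's English description precedes it below -/
import Mathlib

section
/- Let U ⊆ ℂ be open and let h : ℂ → ℂ be twice continuously differentiable in the real sense on U, with Im(h(z)) > 0 for all z ∈ U, and suppose h satisfies the harmonic map equation into the hyperbolic upper half-plane: ∂_z̄(h_z)(z) + (i / Im(h(z)))·h_z(z)·h_z̄(z) = 0 for all z ∈ U. Then the function Φ : U → ℂ defined by Φ(z) = h_z(z)·conj(h_z̄(z)) / (Im(h(z)))² is complex-differentiable (holomorphic) on U. -/
/-- The Wirtinger derivative `h_z = (1/2)(D_x h − i·D_y h)`. -/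
noncomputable def wdz (h : ℂ → ℂ) (z : ℂ) : ℂ :=
  (1 / 2) * (fderiv ℝ h z 1 - Complex.I * fderiv ℝ h z Complex.I)

/-- The Wirtinger derivative `h_z̄ = (1/2)(D_x h + i·D_y h)`. -/
noncomputable def wdzbar (h : ℂ → ℂ) (z : ℂ) : ℂ :=
  (1 / 2) * (fderiv ℝ h z 1 + Complex.I * fderiv ℝ h z Complex.I)

section helpers

variable {f g : ℂ → ℂ} {z : ℂ}

private lemma fderiv_apply_mul (hf : DifferentiableAt ℝ f z) (hg : DifferentiableAt ℝ g z)
    (c : ℂ) :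
    fderiv ℝ (fun w => f w * g w) z c
      = fderiv ℝ f z c * g z + f z * fderiv ℝ g z c := by
  rw [fderiv_fun_mul hf hg]
  simp only [ContinuousLinearMap.add_apply, ContinuousLinearMap.smul_apply, smul_eq_mul]
  ring

private lemma hasFDerivAt_inv_comp (hg : DifferentiableAt ℝ g z) (hgz : g z ≠ 0) :
    HasFDerivAt (fun w => (g w)⁻¹)
      (((ContinuousLinearMap.smulRight (1 : ℂ →L[ℂ] ℂ) (-((g z) ^ 2)⁻¹)).restrictScalars ℝ).comp
        (fderiv ℝ g z)) z :=
  ((hasFDerivAt_inv hgz).restrictScalars ℝ).comp z hg.hasFDerivAt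

private lemma fderiv_apply_inv (hg : DifferentiableAt ℝ g z) (hgz : g z ≠ 0) (c : ℂ) :
    fderiv ℝ (fun w => (g w)⁻¹) z c = -(fderiv ℝ g z c) / (g z) ^ 2 := by
  rw [(hasFDerivAt_inv_comp hg hgz).fderiv]
  simp only [ContinuousLinearMap.coe_comp', Function.comp_apply,
    ContinuousLinearMap.coe_restrictScalars', ContinuousLinearMap.smulRight_apply,
    ContinuousLinearMap.one_apply, smul_eq_mul]
  field_simp

private lemma fderiv_apply_conj (hf : DifferentiableAt ℝ f z) (c : ℂ) :
    fderiv ℝ (fun w => (starRingEnd ℂ) (f w)) z c = (starRingEnd ℂ) (fderiv ℝ f z c) := by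
  have h1 : HasFDerivAt (fun w => (starRingEnd ℂ) (f w))
      ((Complex.conjCLE : ℂ →L[ℝ] ℂ).comp (fderiv ℝ f z)) z :=
    (Complex.conjCLE.hasFDerivAt).comp z hf.hasFDerivAt
  rw [h1.fderiv]
  rfl

private lemma fderiv_apply_im (hf : DifferentiableAt ℝ f z) (c : ℂ) :
    fderiv ℝ (fun w => ((f w).im : ℂ)) z c = (((fderiv ℝ f z c).im : ℂ)) := by
  have h1 : HasFDerivAt (fun w => ((f w).im : ℂ))
      ((Complex.ofRealCLM.comp Complex.imCLM).comp (fderiv ℝ f z)) z :=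
    (Complex.ofRealCLM.comp Complex.imCLM).hasFDerivAt.comp z hf.hasFDerivAt
  rw [h1.fderiv]
  rfl

private lemma wdzbar_mul (hf : DifferentiableAt ℝ f z) (hg : DifferentiableAt ℝ g z) :
    wdzbar (fun w => f w * g w) z = wdzbar f z * g z + f z * wdzbar g z := by
  unfold wdzbar
  rw [fderiv_apply_mul hf hg 1, fderiv_apply_mul hf hg Complex.I]
  ring

private lemma wdzbar_inv (hg : DifferentiableAt ℝ g z) (hgz : g z ≠ 0) :
    wdzbar (fun w => (g w)⁻¹) z = -(wdzbar g z) / (g z) ^ 2 := by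
  unfold wdzbar
  rw [fderiv_apply_inv hg hgz 1, fderiv_apply_inv hg hgz Complex.I]
  ring

private lemma wdzbar_conj (hf : DifferentiableAt ℝ f z) :
    wdzbar (fun w => (starRingEnd ℂ) (f w)) z = (starRingEnd ℂ) (wdz f z) := by
  unfold wdzbar wdz
  rw [fderiv_apply_conj hf 1, fderiv_apply_conj hf Complex.I]
  simp only [map_mul, map_sub, map_one, map_div₀, map_ofNat, Complex.conj_I]
  ring

private lemma wdzbar_im (hf : DifferentiableAt ℝ f z) :
    wdzbar (fun w => ((f w).im : ℂ)) z
      = -(Complex.I) / 2 * (wdzbar f z - (starRingEnd ℂ) (wdz f z)) := by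
  unfold wdzbar wdz
  rw [fderiv_apply_im hf 1, fderiv_apply_im hf Complex.I,
    Complex.im_eq_sub_conj (fderiv ℝ f z 1), Complex.im_eq_sub_conj (fderiv ℝ f z Complex.I)]
  simp only [map_mul, map_sub, map_one, map_div₀, map_ofNat, Complex.conj_I]
  have hI := Complex.I_ne_zero
  field_simp
  linear_combination ((fderiv ℝ f z 1) - (starRingEnd ℂ) (fderiv ℝ f z 1)
    + Complex.I * (fderiv ℝ f z Complex.I)
    - Complex.I * (starRingEnd ℂ) (fderiv ℝ f z Complex.I)) * Complex.I_sq

private lemma hasFDerivAt_fderiv_apply (hF : DifferentiableAt ℝ (fderiv ℝ f) z) (c : ℂ) :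
    HasFDerivAt (fun w => fderiv ℝ f w c)
      ((ContinuousLinearMap.apply ℝ ℂ c).comp (fderiv ℝ (fderiv ℝ f) z)) z :=
  (ContinuousLinearMap.apply ℝ ℂ c).hasFDerivAt.comp z hF.hasFDerivAt

private lemma wdz_differentiableAt (hF : DifferentiableAt ℝ (fderiv ℝ f) z) :
    DifferentiableAt ℝ (fun w => wdz f w) z := by
  unfold wdz
  exact (((hasFDerivAt_fderiv_apply hF 1).differentiableAt).sub
    (((hasFDerivAt_fderiv_apply hF Complex.I).differentiableAt).const_mul _)).const_mul _

private lemma wdzbar_differentiableAt (hF : DifferentiableAt ℝ (fderiv ℝ f) z) :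
    DifferentiableAt ℝ (fun w => wdzbar f w) z := by
  unfold wdzbar
  exact (((hasFDerivAt_fderiv_apply hF 1).differentiableAt).add
    (((hasFDerivAt_fderiv_apply hF Complex.I).differentiableAt).const_mul _)).const_mul _

private lemma fderiv_wdz_apply (hF : DifferentiableAt ℝ (fderiv ℝ f) z) (c : ℂ) :
    fderiv ℝ (fun w => wdz f w) z c
      = (1 / 2) * (fderiv ℝ (fderiv ℝ f) z c 1
          - Complex.I * fderiv ℝ (fderiv ℝ f) z c Complex.I) := by
  unfold wdz
  have h1 := hasFDerivAt_fderiv_apply hF 1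
  have hI := hasFDerivAt_fderiv_apply hF Complex.I
  have h2 := ((h1.sub (hI.const_mul Complex.I)).const_mul ((1 : ℂ) / 2)).fderiv
  simp only [Pi.sub_apply] at h2
  rw [h2]
  simp [ContinuousLinearMap.apply]

private lemma fderiv_wdzbar_apply (hF : DifferentiableAt ℝ (fderiv ℝ f) z) (c : ℂ) :
    fderiv ℝ (fun w => wdzbar f w) z c
      = (1 / 2) * (fderiv ℝ (fderiv ℝ f) z c 1
          + Complex.I * fderiv ℝ (fderiv ℝ f) z c Complex.I) := by
  unfold wdzbar
  have h1 := hasFDerivAt_fderiv_apply hF 1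
  have hI := hasFDerivAt_fderiv_apply hF Complex.I
  have h2 := ((h1.add (hI.const_mul Complex.I)).const_mul ((1 : ℂ) / 2)).fderiv
  simp only [Pi.add_apply] at h2
  rw [h2]
  simp [ContinuousLinearMap.apply]
  ring

private lemma wdz_wdzbar_symm (hev : ∀ᶠ y in nhds z, HasFDerivAt f (fderiv ℝ f y) y)
    (hF : DifferentiableAt ℝ (fderiv ℝ f) z) :
    wdz (fun w => wdzbar f w) z = wdzbar (fun w => wdz f w) z := by
  have hsymm := second_derivative_symmetric_of_eventually hev hF.hasFDerivAt
  show (1 / 2) * (fderiv ℝ (fun w => wdzbar f w) z 1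
        - Complex.I * fderiv ℝ (fun w => wdzbar f w) z Complex.I)
      = (1 / 2) * (fderiv ℝ (fun w => wdz f w) z 1
        + Complex.I * fderiv ℝ (fun w => wdz f w) z Complex.I)
  rw [fderiv_wdzbar_apply hF 1, fderiv_wdzbar_apply hF Complex.I,
    fderiv_wdz_apply hF 1, fderiv_wdz_apply hF Complex.I,
    hsymm 1 Complex.I]
  ring

private lemma differentiableAt_of_wdzbar_eq_zero (hf : DifferentiableAt ℝ f z)
    (h0 : wdzbar f z = 0) : DifferentiableAt ℂ f z := by
  have h1 : fderiv ℝ f z 1 + Complex.I * fderiv ℝ f z Complex.I = 0 := by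
    unfold wdzbar at h0
    linear_combination 2 * h0
  have hAi : fderiv ℝ f z Complex.I = Complex.I * fderiv ℝ f z 1 := by
    linear_combination (-Complex.I) * h1 + (fderiv ℝ f z Complex.I) * Complex.I_sq
  have key : HasFDerivAt f ((fderiv ℝ f z 1) • (1 : ℂ →L[ℂ] ℂ)) z := by
    apply hasFDerivAt_of_restrictScalars ℝ hf.hasFDerivAt
    ext w
    simp only [ContinuousLinearMap.coe_restrictScalars', ContinuousLinearMap.smul_apply,
      ContinuousLinearMap.one_apply, smul_eq_mul]
    symm
    have hrep : w = (w.re : ℝ) • (1 : ℂ) + (w.im : ℝ) • Complex.I := by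
      simp [Complex.real_smul, Complex.re_add_im]
    calc fderiv ℝ f z w = fderiv ℝ f z ((w.re : ℝ) • (1 : ℂ) + (w.im : ℝ) • Complex.I) := by
          rw [← hrep]
      _ = (w.re : ℝ) • fderiv ℝ f z 1 + (w.im : ℝ) • fderiv ℝ f z Complex.I := by
          rw [map_add, map_smul, map_smul]
      _ = fderiv ℝ f z 1 * w := by
          rw [hAi, Complex.real_smul, Complex.real_smul]
          conv_rhs => rw [← Complex.re_add_im w]
          ring
  exact key.differentiableAt

end helpers

/-- The Hopf differential of a harmonic map into the hyperbolic upper half-plane is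
holomorphic: if `h` is C² on an open set `U`, maps into the upper half-plane, and
satisfies `∂_z̄(h_z) + (i / Im h)·h_z·h_z̄ = 0` on `U`, then
`Φ(z) = h_z(z)·conj(h_z̄(z))/(Im h(z))²` is holomorphic on `U`. -/
theorem stmt_5 (U : Set ℂ) (hU : IsOpen U) (h : ℂ → ℂ)
    (hC2 : ContDiffOn ℝ 2 h U)
    (him : ∀ z ∈ U, 0 < (h z).im)
    (hharm : ∀ z ∈ U,
      wdzbar (fun w => wdz h w) z
        + (Complex.I / ((h z).im : ℂ)) * wdz h z * wdzbar h z = 0) :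
    DifferentiableOn ℂ
      (fun z => wdz h z * (starRingEnd ℂ) (wdzbar h z) / (((h z).im : ℂ)) ^ 2) U := by
  have hΦeq : (fun z => wdz h z * (starRingEnd ℂ) (wdzbar h z) / (((h z).im : ℂ)) ^ 2)
      = fun w => (wdz h w * (starRingEnd ℂ) (wdzbar h w))
          * ((((h w).im : ℂ)) * (((h w).im : ℂ)))⁻¹ := by
    funext w
    rw [div_eq_mul_inv, sq]
  rw [hΦeq]
  intro z hz
  have hzU : U ∈ nhds z := hU.mem_nhds hz
  have hCz : ContDiffAt ℝ 2 h z := hC2.contDiffAt hzU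
  have hdh : DifferentiableAt ℝ h z := hCz.differentiableAt (by norm_num)
  have hF : DifferentiableAt ℝ (fderiv ℝ h) z :=
    (hCz.fderiv_right (m := 1) (by norm_num)).differentiableAt (by norm_num)
  have hev : ∀ᶠ y in nhds z, HasFDerivAt h (fderiv ℝ h y) y := by
    filter_upwards [hzU] with y hy
    exact ((hC2.contDiffAt (hU.mem_nhds hy)).differentiableAt (by norm_num)).hasFDerivAt
  -- differentiability of the building blocks
  have hda : DifferentiableAt ℝ (fun w => wdz h w) z := wdz_differentiableAt hF
  have hdb : DifferentiableAt ℝ (fun w => wdzbar h w) z := wdzbar_differentiableAt hF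
  have hdcb : DifferentiableAt ℝ (fun w => (starRingEnd ℂ) (wdzbar h w)) z :=
    ((Complex.conjCLE.hasFDerivAt).comp z hdb.hasFDerivAt).differentiableAt
  have hdv : DifferentiableAt ℝ (fun w => (((h w).im : ℂ))) z :=
    ((Complex.ofRealCLM.comp Complex.imCLM).hasFDerivAt.comp z hdh.hasFDerivAt).differentiableAt
  have hv0 : (((h z).im : ℂ)) ≠ 0 := by
    exact_mod_cast (him z hz).ne'
  have hdq : DifferentiableAt ℝ (fun w => (((h w).im : ℂ)) * (((h w).im : ℂ))) z := hdv.mul hdv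
  have hq0 : (((h z).im : ℂ)) * (((h z).im : ℂ)) ≠ 0 := mul_ne_zero hv0 hv0
  have hdqinv : DifferentiableAt ℝ (fun w => ((((h w).im : ℂ)) * (((h w).im : ℂ)))⁻¹) z :=
    (hasFDerivAt_inv_comp hdq hq0).differentiableAt
  have hdprod : DifferentiableAt ℝ (fun w => wdz h w * (starRingEnd ℂ) (wdzbar h w)) z :=
    hda.mul hdcb
  have hdΦ : DifferentiableAt ℝ (fun w => (wdz h w * (starRingEnd ℂ) (wdzbar h w))
      * ((((h w).im : ℂ)) * (((h w).im : ℂ)))⁻¹) z := hdprod.mul hdqinv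
  -- key identities
  have E1 : wdzbar (fun w => wdz h w) z
      = -((Complex.I / ((h z).im : ℂ)) * wdz h z * wdzbar h z) :=
    eq_neg_of_add_eq_zero_left (hharm z hz)
  have E2 : wdz (fun w => wdzbar h w) z
      = -((Complex.I / ((h z).im : ℂ)) * wdz h z * wdzbar h z) :=
    (wdz_wdzbar_symm hev hF).trans E1
  -- Wirtinger ∂̄ of Φ vanishes
  have hW : wdzbar (fun w => (wdz h w * (starRingEnd ℂ) (wdzbar h w))
      * ((((h w).im : ℂ)) * (((h w).im : ℂ)))⁻¹) z = 0 := by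
    rw [wdzbar_mul hdprod hdqinv, wdzbar_mul hda hdcb, wdzbar_inv hdq hq0,
      wdzbar_mul hdv hdv, wdzbar_im hdh, wdzbar_conj hdb, E1, E2]
    simp only [map_neg, map_mul, map_div₀, Complex.conj_I, Complex.conj_ofReal]
    field_simp
    ring
  exact (differentiableAt_of_wdzbar_eq_zero hdΦ hW).differentiableWithinAt
end

section
/- Let d > 0 and b ∈ ℝ, and let u : ℂ → ℝ be continuous on the closed ball closedBall(0, d) and twice continuously differentiable on the open ball ball(0, d), satisfying Δu(z) ≥ 2·u(z) for all z ∈ ball(0, d) and u(z) ≤ b for all z ∈ closedBall(0, d). Then u(0) ≤ b / cosh(d). -/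
open Set Filter Topology Finset Nat

/-! ### Auxiliary lemmas -/

lemma choose_le_central (n k : ℕ) (hk : k ≤ n) : n.choose k ≤ (2*n).choose (2*k) := by
  have h : (2*n).choose (2*k) = (n+n).choose (k+k) := by ring_nf
  rw [h, Nat.add_choose_eq]
  calc n.choose k ≤ n.choose k * n.choose k :=
        Nat.le_mul_of_pos_left _ (Nat.choose_pos hk)
    _ ≤ ∑ ij ∈ Finset.HasAntidiagonal.antidiagonal (k+k), n.choose ij.1 * n.choose ij.2 := by
        refine Finset.single_le_sum (f := fun ij : ℕ × ℕ => n.choose ij.1 * n.choose ij.2)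
          (fun i _ => Nat.zero_le _) (a := (k,k)) ?_
        simp [Finset.mem_antidiagonal]

lemma cosh_sqrt_le (x y : ℝ) :
    Real.cosh (Real.sqrt (x^2 + y^2)) ≤ Real.cosh x * Real.cosh y := by
  set s := x^2 + y^2 with hs_def
  have hs : 0 ≤ s := by positivity
  have h1 : HasSum (fun n : ℕ => s ^ n / (2*n)!) (Real.cosh (Real.sqrt s)) := by
    have := Real.hasSum_cosh (Real.sqrt s)
    convert this using 2 with n
    rw [pow_mul, Real.sq_sqrt hs]
  set f : ℕ → ℝ := fun n => x ^ (2*n) / (2*n)! with hf_def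
  set g : ℕ → ℝ := fun n => y ^ (2*n) / (2*n)! with hg_def
  have hfn : ∀ n, 0 ≤ f n := fun n => by
    simp only [hf_def, pow_mul]; positivity
  have hgn : ∀ n, 0 ≤ g n := fun n => by
    simp only [hg_def, pow_mul]; positivity
  have hfs : Summable fun n => ‖f n‖ := by
    simpa [Real.norm_of_nonneg (hfn _)] using (Real.hasSum_cosh x).summable
  have hgs : Summable fun n => ‖g n‖ := by
    simpa [Real.norm_of_nonneg (hgn _)] using (Real.hasSum_cosh y).summable
  have hprod : Real.cosh x * Real.cosh y
      = ∑' n : ℕ, ∑ kl ∈ Finset.HasAntidiagonal.antidiagonal n, f kl.1 * g kl.2 := by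
    rw [← (Real.hasSum_cosh x).tsum_eq, ← (Real.hasSum_cosh y).tsum_eq]
    exact tsum_mul_tsum_eq_tsum_sum_antidiagonal_of_summable_norm hfs hgs
  rw [hprod, ← h1.tsum_eq]
  refine Summable.tsum_le_tsum ?_ h1.summable
    ((summable_norm_sum_mul_antidiagonal_of_summable_norm hfs hgs).of_norm)
  intro n
  have hexp : s ^ n = ∑ kl ∈ Finset.HasAntidiagonal.antidiagonal n,
      (x^2) ^ kl.1 * (y^2) ^ kl.2 * n.choose kl.1 := by
    rw [hs_def, add_pow, Finset.Nat.sum_antidiagonal_eq_sum_range_succ_mk]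
  rw [hexp, Finset.sum_div]
  refine Finset.sum_le_sum ?_
  rintro ⟨k, l⟩ hkl
  rw [Finset.HasAntidiagonal.mem_antidiagonal] at hkl
  simp only [hf_def, hg_def]
  have hkn : k ≤ n := by omega
  have hfact : (n.choose k : ℝ) * ((2*k)! * (2*l)!) ≤ (2*n)! := by
    have h2 : 2*k ≤ 2*n := by omega
    have hv := Nat.choose_mul_factorial_mul_factorial h2
    have hll : 2*n - 2*k = 2*l := by omega
    rw [hll] at hv
    have hle : n.choose k * ((2*k)! * (2*l)!) ≤ (2*n).choose (2*k) * ((2*k)! * (2*l)!) :=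
      Nat.mul_le_mul_right _ (choose_le_central n k hkn)
    have h3 : n.choose k * ((2*k)! * (2*l)!) ≤ (2*n)! := by
      calc n.choose k * ((2*k)! * (2*l)!) ≤ (2*n).choose (2*k) * ((2*k)! * (2*l)!) := hle
        _ = (2*n)! := by rw [← mul_assoc]; exact hv
    exact_mod_cast h3
  have hxk : (0:ℝ) ≤ (x^2)^k * (y^2)^l := by positivity
  have key : (n.choose k : ℝ) / (2*n)! ≤ 1 / ((2*k)! * (2*l)!) := by
    rw [div_le_div_iff₀ (by positivity) (by positivity), one_mul]
    exact hfact
  calc (x^2)^k * (y^2)^l * (n.choose k) / (2*n)!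
      = ((x^2)^k * (y^2)^l) * ((n.choose k : ℝ) / (2*n)!) := by ring
    _ ≤ ((x^2)^k * (y^2)^l) * (1 / ((2*k)! * (2*l)!)) :=
        mul_le_mul_of_nonneg_left key hxk
    _ = x^(2*k) / (2*k)! * (y^(2*l) / (2*l)!) := by
        rw [pow_mul, pow_mul]; ring

/-! ### Second derivative test at an interior maximum -/

lemma second_deriv_test {f : ℂ → ℝ} {s : Set ℂ} (hs : IsOpen s) {z₀ : ℂ} (hz : z₀ ∈ s)
    (hf : ContDiffOn ℝ 2 f s) (e : ℂ)
    (hmax : ∀ t : ℝ, z₀ + t • e ∈ s → f (z₀ + t • e) ≤ f z₀) :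
    fderiv ℝ (fun w => fderiv ℝ f w e) z₀ e ≤ 0 := by
  by_contra hA'
  push_neg at hA'
  set ψ : ℂ → ℝ := fun w => fderiv ℝ f w e with hψ_def
  set A : ℝ := fderiv ℝ ψ z₀ e with hA_def
  have hdiff : ∀ w ∈ s, DifferentiableAt ℝ f w := fun w hw =>
    (hf.contDiffAt (hs.mem_nhds hw)).differentiableAt (by norm_num)
  have hf' : ContDiffOn ℝ 1 (fderiv ℝ f) s := hf.fderiv_of_isOpen hs le_rfl
  have hψdiff : ∀ w ∈ s, DifferentiableAt ℝ ψ w := by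
    intro w hw
    have h1 : DifferentiableAt ℝ (fderiv ℝ f) w :=
      (hf'.contDiffAt (hs.mem_nhds hw)).differentiableAt (by norm_num)
    exact ((ContinuousLinearMap.apply ℝ ℝ e).differentiableAt).comp w h1
  set L : ℝ → ℂ := fun t => z₀ + t • e with hL_def
  have hL : ∀ t : ℝ, HasDerivAt L e t := by
    intro t
    have : HasDerivAt (fun t : ℝ => t • e) ((1:ℝ) • e) t :=
      (hasDerivAt_id t).smul_const e
    have h := this.const_add z₀
    rw [one_smul] at h
    exact h
  have hL0 : L 0 = z₀ := by simp [hL_def]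
  set fph : ℝ → ℝ := fun t => f (L t) with hfph_def
  have hfph' : ∀ t : ℝ, L t ∈ s → HasDerivAt fph (ψ (L t)) t := by
    intro t ht
    exact ((hdiff (L t) ht).hasFDerivAt).comp_hasDerivAt t (hL t)
  set χ : ℝ → ℝ := fun t => ψ (L t) with hχ_def
  have hχ0 : HasDerivAt χ A 0 := by
    have h1 : HasFDerivAt ψ (fderiv ℝ ψ z₀) (L 0) := by
      rw [hL0]; exact (hψdiff z₀ hz).hasFDerivAt
    exact h1.comp_hasDerivAt 0 (hL 0)
  have hLcont : Continuous L := by fun_prop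
  have hnear : ∀ᶠ t in 𝓝 (0:ℝ), L t ∈ s := by
    have := hLcont.continuousAt (x := (0:ℝ))
    exact this.preimage_mem_nhds (by rw [hL0]; exact hs.mem_nhds hz)
  obtain ⟨ε₀, hε₀, hball⟩ := Metric.eventually_nhds_iff.mp hnear
  have hlocmax : IsLocalMax fph 0 := by
    filter_upwards [hnear] with t ht
    calc fph t ≤ f z₀ := hmax t ht
      _ = fph 0 := by simp only [hfph_def, hL0]
  have hχ00 : χ 0 = 0 := by
    have := hlocmax.hasDerivAt_eq_zero (hfph' 0 (by rw [hL0]; exact hz))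
    simpa [hχ_def] using this
  have hslope : Tendsto (slope χ 0) (𝓝[≠] 0) (𝓝 A) := hasDerivAt_iff_tendsto_slope.mp hχ0
  have hpos : ∀ᶠ t in 𝓝[>] (0:ℝ), 0 < χ t := by
    have h1 : ∀ᶠ t in 𝓝[≠] (0:ℝ), 0 < slope χ 0 t :=
      hslope.eventually (eventually_gt_nhds hA')
    have h2 : ∀ᶠ t in 𝓝[>] (0:ℝ), 0 < slope χ 0 t :=
      h1.filter_mono (nhdsWithin_mono _ fun t ht => (Set.mem_Ioi.mp ht).ne')
    filter_upwards [h2, self_mem_nhdsWithin] with t ht ht'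
    have : slope χ 0 t = χ t / t := by simp [slope_def_field, hχ00]
    rw [this] at ht
    have := mul_pos ht (show (0:ℝ) < t from ht')
    rwa [div_mul_cancel₀] at this
    exact (Set.mem_Ioi.mp ht').ne'
  obtain ⟨ε₁, hε₁mem, hIoo⟩ := mem_nhdsGT_iff_exists_Ioo_subset.mp hpos
  set ε : ℝ := min (ε₀ / 2) (ε₁ / 2) with hε_def
  have hε₁pos : 0 < ε₁ := hε₁mem
  have hεpos : 0 < ε := lt_min (by linarith) (by linarith)
  have hmem : ∀ t ∈ Icc (0:ℝ) ε, L t ∈ s := by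
    intro t ht
    apply hball
    rw [Real.dist_eq, sub_zero, abs_of_nonneg ht.1]
    calc t ≤ ε := ht.2
      _ ≤ ε₀ / 2 := min_le_left _ _
      _ < ε₀ := by linarith
  have hmono : StrictMonoOn fph (Icc 0 ε) := by
    apply strictMonoOn_of_deriv_pos (convex_Icc 0 ε)
    · intro t ht
      exact ((hfph' t (hmem t ht)).differentiableAt).continuousAt.continuousWithinAt
    · intro t ht
      rw [interior_Icc] at ht
      rw [(hfph' t (hmem t ⟨le_of_lt ht.1, le_of_lt ht.2⟩)).deriv]
      apply hIoo
      constructor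
      · exact ht.1
      · calc t < ε := ht.2
          _ ≤ ε₁ / 2 := min_le_right _ _
          _ < ε₁ := by linarith
  have h1 : fph 0 < fph ε := hmono (left_mem_Icc.mpr hεpos.le) (right_mem_Icc.mpr hεpos.le) hεpos
  have h2 : fph ε ≤ fph 0 := by
    have := hmax ε (hmem ε (right_mem_Icc.mpr hεpos.le))
    simpa [hfph_def, hL_def, hL0] using this
  linarith

/-! ### The comparison function -/

/-- The Euclidean Laplacian `Δf = ∂²f/∂x² + ∂²f/∂y²` on `ℂ ≅ ℝ²`. -/
noncomputable def lap (f : ℂ → ℝ) (z : ℂ) : ℝ :=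
  fderiv ℝ (fun w => fderiv ℝ f w 1) z 1
    + fderiv ℝ (fun w => fderiv ℝ f w Complex.I) z Complex.I

lemma hasFDerivAt_mul_re_im (a b a' b' : ℝ → ℝ)
    (ha : ∀ t, HasDerivAt a (a' t) t) (hb : ∀ t, HasDerivAt b (b' t) t) (z : ℂ) :
    HasFDerivAt (fun w : ℂ => a w.re * b w.im)
      ((b z.im * a' z.re) • Complex.reCLM + (a z.re * b' z.im) • Complex.imCLM) z := by
  have hra : HasFDerivAt (fun w : ℂ => a w.re) (a' z.re • (Complex.reCLM : ℂ →L[ℝ] ℝ)) z :=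
    (ha z.re).comp_hasFDerivAt z Complex.reCLM.hasFDerivAt
  have hrb : HasFDerivAt (fun w : ℂ => b w.im) (b' z.im • (Complex.imCLM : ℂ →L[ℝ] ℝ)) z :=
    (hb z.im).comp_hasFDerivAt z Complex.imCLM.hasFDerivAt
  have := hra.mul hrb
  refine this.congr_fderiv ?_
  rw [smul_smul, smul_smul, add_comm]

lemma fderiv_mul_re_im_one (a b a' b' : ℝ → ℝ)
    (ha : ∀ t, HasDerivAt a (a' t) t) (hb : ∀ t, HasDerivAt b (b' t) t) (z : ℂ) :
    fderiv ℝ (fun w : ℂ => a w.re * b w.im) z 1 = a' z.re * b z.im := by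
  rw [(hasFDerivAt_mul_re_im a b a' b' ha hb z).fderiv]
  simp [mul_comm]

lemma fderiv_mul_re_im_I (a b a' b' : ℝ → ℝ)
    (ha : ∀ t, HasDerivAt a (a' t) t) (hb : ∀ t, HasDerivAt b (b' t) t) (z : ℂ) :
    fderiv ℝ (fun w : ℂ => a w.re * b w.im) z Complex.I = a z.re * b' z.im := by
  rw [(hasFDerivAt_mul_re_im a b a' b' ha hb z).fderiv]
  simp

/-- The comparison function `cosh x · cosh y`. -/
noncomputable def cc (z : ℂ) : ℝ := Real.cosh z.re * Real.cosh z.im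

lemma cc_contDiff : ContDiff ℝ 2 cc :=
  ((Real.contDiff_cosh.of_le le_top).comp (Complex.reCLM.contDiff.of_le le_top)).mul
    ((Real.contDiff_cosh.of_le le_top).comp (Complex.imCLM.contDiff.of_le le_top))

lemma fderiv_cc_one (w : ℂ) :
    fderiv ℝ cc w 1 = Real.sinh w.re * Real.cosh w.im :=
  fderiv_mul_re_im_one _ _ _ _ Real.hasDerivAt_cosh Real.hasDerivAt_cosh w

lemma fderiv_cc_I (w : ℂ) :
    fderiv ℝ cc w Complex.I = Real.cosh w.re * Real.sinh w.im :=
  fderiv_mul_re_im_I _ _ _ _ Real.hasDerivAt_cosh Real.hasDerivAt_cosh w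

lemma lap_cc (z : ℂ) : lap cc z = 2 * cc z := by
  have h1 : (fun w : ℂ => fderiv ℝ cc w 1) = fun w : ℂ => Real.sinh w.re * Real.cosh w.im :=
    funext fderiv_cc_one
  have h2 : (fun w : ℂ => fderiv ℝ cc w Complex.I)
      = fun w : ℂ => Real.cosh w.re * Real.sinh w.im := funext fderiv_cc_I
  rw [lap, h1, h2,
    fderiv_mul_re_im_one _ _ _ _ Real.hasDerivAt_sinh Real.hasDerivAt_cosh z,
    fderiv_mul_re_im_I _ _ _ _ Real.hasDerivAt_cosh Real.hasDerivAt_sinh z, cc]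
  ring

lemma diff_fderiv_apply {f : ℂ → ℝ} {s : Set ℂ} (hs : IsOpen s) (hf : ContDiffOn ℝ 2 f s)
    {z : ℂ} (hz : z ∈ s) (e : ℂ) :
    DifferentiableAt ℝ (fun w => fderiv ℝ f w e) z := by
  have hf' : ContDiffOn ℝ 1 (fderiv ℝ f) s := hf.fderiv_of_isOpen hs le_rfl
  have h1 : DifferentiableAt ℝ (fderiv ℝ f) z :=
    (hf'.contDiffAt (hs.mem_nhds hz)).differentiableAt (by norm_num)
  exact ((ContinuousLinearMap.apply ℝ ℝ e).differentiableAt).comp z h1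

lemma lap_sub (u : ℂ → ℝ) {s : Set ℂ} (hs : IsOpen s) (hu : ContDiffOn ℝ 2 u s) (c : ℝ)
    {z : ℂ} (hz : z ∈ s) :
    lap (fun w => u w - c * cc w) z = lap u z - c * lap cc z := by
  have hccd : ∀ w : ℂ, DifferentiableAt ℝ cc w := fun w =>
    cc_contDiff.differentiable (by norm_num) w
  have key : ∀ e : ℂ,
      fderiv ℝ (fun w => fderiv ℝ (fun w' => u w' - c * cc w') w e) z e
        = fderiv ℝ (fun w => fderiv ℝ u w e) z e
          - c * fderiv ℝ (fun w => fderiv ℝ cc w e) z e := by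
    intro e
    have hEq : (fun w => fderiv ℝ (fun w' => u w' - c * cc w') w e)
        =ᶠ[nhds z] (fun w => fderiv ℝ u w e - c * fderiv ℝ cc w e) := by
      filter_upwards [hs.mem_nhds hz] with w hw
      have hud : DifferentiableAt ℝ u w :=
        (hu.contDiffAt (hs.mem_nhds hw)).differentiableAt (by norm_num)
      rw [fderiv_fun_sub hud ((hccd w).const_mul c), fderiv_const_mul (hccd w) c]
      simp
    rw [hEq.fderiv_eq]
    have hd1 : DifferentiableAt ℝ (fun w => fderiv ℝ u w e) z :=
      diff_fderiv_apply hs hu hz e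
    have hd2 : DifferentiableAt ℝ (fun w => fderiv ℝ cc w e) z :=
      diff_fderiv_apply isOpen_univ (cc_contDiff.contDiffOn) trivial e
    rw [fderiv_fun_sub hd1 (hd2.const_mul c), fderiv_const_mul hd2 c]
    simp
  rw [lap, lap, lap, key 1, key Complex.I]
  ring

lemma cosh_abs_le_cc (z : ℂ) : Real.cosh ‖z‖ ≤ cc z := by
  have habs : ‖z‖ = Real.sqrt (z.re ^ 2 + z.im ^ 2) := by
    rw [Complex.norm_def, Complex.normSq_apply]
    ring_nf
  rw [habs, cc]
  exact cosh_sqrt_le z.re z.im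

/-! ### Main theorem -/

/-- Analytic core of Minsky's decay lemma (Lemma 3.7): if `u` is continuous on the
closed disk of radius `d`, C² on the open disk, satisfies `Δu ≥ 2u` there and `u ≤ b`
on the closed disk, then `u(0) ≤ b / cosh d`. -/
theorem stmt_8 (d b : ℝ) (hd : 0 < d) (u : ℂ → ℝ)
    (hcont : ContinuousOn u (Metric.closedBall (0 : ℂ) d))
    (hC2 : ContDiffOn ℝ 2 u (Metric.ball (0 : ℂ) d))
    (hsub : ∀ z ∈ Metric.ball (0 : ℂ) d, 2 * u z ≤ lap u z)
    (hbd : ∀ z ∈ Metric.closedBall (0 : ℂ) d, u z ≤ b) :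
    u 0 ≤ b / Real.cosh d := by
  have hcosh_pos : (0:ℝ) < Real.cosh d := Real.cosh_pos d
  have h0mem : (0:ℂ) ∈ Metric.closedBall (0:ℂ) d := by
    simp [Metric.mem_closedBall, hd.le]
  by_cases hb : b ≤ 0
  · have h0 : u 0 ≤ b := hbd 0 h0mem
    have hbb : b ≤ b / Real.cosh d := by
      rw [le_div_iff₀ hcosh_pos]
      nlinarith [Real.one_le_cosh d]
    linarith
  push_neg at hb
  set c : ℝ := b / Real.cosh d with hc_def
  have hc_pos : 0 < c := div_pos hb hcosh_pos
  set v : ℂ → ℝ := fun w => u w - c * cc w with hv_def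
  have hvcont : ContinuousOn v (Metric.closedBall (0:ℂ) d) :=
    hcont.sub ((continuous_const.mul (cc_contDiff.continuous)).continuousOn)
  obtain ⟨z₀, hz₀mem, hmax⟩ :=
    (isCompact_closedBall (0:ℂ) d).exists_isMaxOn ⟨0, h0mem⟩ hvcont
  have hccd : c * Real.cosh d = b := div_mul_cancel₀ b (ne_of_gt hcosh_pos)
  have hsphere : ∀ z ∈ Metric.closedBall (0:ℂ) d, z ∉ Metric.ball (0:ℂ) d → v z ≤ 0 := by
    intro z hz hnb
    have h1 : dist z 0 ≤ d := Metric.mem_closedBall.mp hz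
    have h2 : ¬ dist z 0 < d := fun h => hnb (Metric.mem_ball.mpr h)
    have habs : ‖z‖ = d := by
      rw [Complex.dist_eq, sub_zero] at h1 h2
      linarith [not_lt.mp h2]
    have h3 : Real.cosh d ≤ cc z := by
      rw [← habs]; exact cosh_abs_le_cc z
    have h4 : b ≤ c * cc z := by
      calc b = c * Real.cosh d := hccd.symm
        _ ≤ c * cc z := mul_le_mul_of_nonneg_left h3 hc_pos.le
    have h5 : u z ≤ b := hbd z hz
    simp only [hv_def]
    linarith
  have hvz₀ : v z₀ ≤ 0 := by
    by_contra hpos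
    push_neg at hpos
    have hz₀ball : z₀ ∈ Metric.ball (0:ℂ) d := by
      by_contra hnb
      have := hsphere z₀ hz₀mem hnb
      linarith
    have hvC2 : ContDiffOn ℝ 2 v (Metric.ball (0:ℂ) d) :=
      hC2.sub ((contDiff_const.mul cc_contDiff).contDiffOn)
    have hmax' : ∀ e : ℂ, ∀ t : ℝ, z₀ + t • e ∈ Metric.ball (0:ℂ) d →
        v (z₀ + t • e) ≤ v z₀ := fun e t ht => hmax (Metric.ball_subset_closedBall ht)
    have h1 := second_deriv_test Metric.isOpen_ball hz₀ball hvC2 1 (hmax' 1)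
    have h2 := second_deriv_test Metric.isOpen_ball hz₀ball hvC2 Complex.I (hmax' Complex.I)
    have hlapv : lap v z₀ ≤ 0 := by
      rw [lap]; exact add_nonpos h1 h2
    have hls : lap v z₀ = lap u z₀ - c * lap cc z₀ := by
      rw [hv_def]
      exact lap_sub u Metric.isOpen_ball hC2 c hz₀ball
    have hlapu := hsub z₀ hz₀ball
    have hlapcc := lap_cc z₀
    have hvz : v z₀ = u z₀ - c * cc z₀ := by simp [hv_def]
    nlinarith
  have hv0 : v 0 ≤ v z₀ := hmax h0mem
  have hcc0 : cc 0 = 1 := by simp [cc]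
  have : v 0 = u 0 - c := by simp [hv_def, hcc0]
  linarith
end
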